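/- The centre of the group of units of I_n is K^*: a unit u of I_n commutes with every unit of I_n if and only if u = λ·1 for some λ ∈ K∖{0}. -/

import Mathlib

open MvPolynomial

/-- Multiplication by `x_i`, as a `K`-linear endomorphism of `K[x_1,…,x_n]`. -/
noncomputable def xOp (K : Type*) [Field K] (n : ℕ) (i : Fin n) :
    Module.End K (MvPolynomial (Fin n) K) :=
  LinearMap.mulLeft K (X i)

/-- The formal partial derivative `∂/∂x_i`. -/
noncomputable def dOp (K : Type*) [Field K] (n : ℕ) (i : Fin n) :
    Module.End K (MvPolynomial (Fin n) K) :=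
  (pderiv i).toLinearMap

/-- The integration operator `∫_i`, determined by `∫_i(x^α) = x^α·x_i/(α_i+1)`. -/
noncomputable def intOp (K : Type*) [Field K] (n : ℕ) (i : Fin n) :
    Module.End K (MvPolynomial (Fin n) K) :=
  (basisMonomials (Fin n) K).constr K
    (fun α => (((α i : ℕ) : K) + 1)⁻¹ • (monomial (α + Finsupp.single i 1) (1 : K)))

/-- The algebra `I_n` of polynomial integro-differential operators:
the `K`-subalgebra of `End_K(P_n)` generated by the `X_i`, `∂_i` and `∫_i`. -/
noncomputable def IDO (K : Type*) [Field K] (n : ℕ) :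
    Subalgebra K (Module.End K (MvPolynomial (Fin n) K)) :=
  Algebra.adjoin K (Set.range (xOp K n) ∪ Set.range (dOp K n) ∪ Set.range (intOp K n))

/-- `X_i` as an element of `I_n`. -/
noncomputable def xElt (K : Type*) [Field K] (n : ℕ) (i : Fin n) : IDO K n :=
  ⟨xOp K n i, Algebra.subset_adjoin (Or.inl (Or.inl ⟨i, rfl⟩))⟩

/-- `∂_i` as an element of `I_n`. -/
noncomputable def dElt (K : Type*) [Field K] (n : ℕ) (i : Fin n) : IDO K n :=
  ⟨dOp K n i, Algebra.subset_adjoin (Or.inl (Or.inr ⟨i, rfl⟩))⟩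

/-- `∫_i` as an element of `I_n`. -/
noncomputable def intElt (K : Type*) [Field K] (n : ℕ) (i : Fin n) : IDO K n :=
  ⟨intOp K n i, Algebra.subset_adjoin (Or.inr ⟨i, rfl⟩)⟩

namespace Statement10Aux

variable (K : Type*) [Field K] [CharZero K] (n : ℕ)

lemma xOp_mem (i : Fin n) : xOp K n i ∈ IDO K n :=
  Algebra.subset_adjoin (Or.inl (Or.inl ⟨i, rfl⟩))

lemma dOp_mem (i : Fin n) : dOp K n i ∈ IDO K n :=
  Algebra.subset_adjoin (Or.inl (Or.inr ⟨i, rfl⟩))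

lemma intOp_mem (i : Fin n) : intOp K n i ∈ IDO K n :=
  Algebra.subset_adjoin (Or.inr ⟨i, rfl⟩)

/-- The operator sending `x^γ` to `δ_{γβ} x^α`. -/
noncomputable def Eab (α β : Fin n →₀ ℕ) : Module.End K (MvPolynomial (Fin n) K) :=
  (LinearMap.toSpanSingleton K _ (monomial α (1 : K))).comp (lcoeff K β)

variable {K n}

lemma Eab_apply (α β : Fin n →₀ ℕ) (p : MvPolynomial (Fin n) K) :
    Eab K n α β p = coeff β p • monomial α 1 := rfl

lemma xOp_monomial (i : Fin n) (γ : Fin n →₀ ℕ) (c : K) :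
    xOp K n i (monomial γ c) = monomial (γ + Finsupp.single i 1) c := by
  show X i * monomial γ c = _
  rw [X, monomial_mul, one_mul, add_comm]

lemma dOp_monomial (i : Fin n) (γ : Fin n →₀ ℕ) (c : K) :
    dOp K n i (monomial γ c) = monomial (γ - Finsupp.single i 1) (c * (γ i : K)) :=
  pderiv_monomial

lemma intOp_monomial (i : Fin n) (γ : Fin n →₀ ℕ) :
    intOp K n i (monomial γ (1 : K)) =
      (((γ i : ℕ) : K) + 1)⁻¹ • monomial (γ + Finsupp.single i 1) 1 := by
  have := Module.Basis.constr_basis (basisMonomials (Fin n) K) K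
    (fun α => (((α i : ℕ) : K) + 1)⁻¹ • (monomial (α + Finsupp.single i 1) (1 : K))) γ
  simpa [intOp, coe_basisMonomials] using this

variable (K n)

/-- `1 - ∫_i ∂_i`, the projection killing monomials with `γ i ≠ 0`. -/
noncomputable def proj (i : Fin n) : Module.End K (MvPolynomial (Fin n) K) :=
  1 - intOp K n i * dOp K n i

variable {K n}

lemma proj_monomial (i : Fin n) (γ : Fin n →₀ ℕ) :
    proj K n i (monomial γ (1 : K)) = if γ i = 0 then monomial γ 1 else 0 := by
  have hd : dOp K n i (monomial γ (1 : K)) =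
      ((γ i : ℕ) : K) • monomial (γ - Finsupp.single i 1) 1 := by
    rw [dOp_monomial, smul_monomial, smul_eq_mul, mul_one, one_mul]
  rcases Nat.eq_zero_or_pos (γ i) with h | h
  · simp [proj, LinearMap.sub_apply, Module.End.mul_apply, hd, h]
  · obtain ⟨k, hk⟩ : ∃ k, γ i = k + 1 := ⟨γ i - 1, by omega⟩
    have hle : Finsupp.single i 1 ≤ γ := Finsupp.single_le_iff.mpr (by omega)
    have hsub : γ - Finsupp.single i 1 + Finsupp.single i 1 = γ := tsub_add_cancel_of_le hle
    have hsi : (γ - Finsupp.single i 1 : Fin n →₀ ℕ) i = k := by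
      rw [Finsupp.tsub_apply, Finsupp.single_eq_same, hk]; omega
    rw [proj, LinearMap.sub_apply, Module.End.mul_apply, hd, map_smul, intOp_monomial,
      hsi, hsub, hk, smul_smul]
    have hcoef : (((k : ℕ) : K) + 1) * (((k : ℕ) : K) + 1)⁻¹ = 1 :=
      mul_inv_cancel₀ (Nat.cast_add_one_ne_zero k)
    push_cast
    simp [hcoef]

lemma proj_commute (i j : Fin n) : Commute (proj K n i) (proj K n j) := by
  refine (basisMonomials (Fin n) K).ext fun γ => ?_
  rw [coe_basisMonomials]
  simp only [Module.End.mul_apply, proj_monomial]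
  split_ifs <;> simp [proj_monomial, *]

variable (K n)

noncomputable def projs (s : Finset (Fin n)) : Module.End K (MvPolynomial (Fin n) K) :=
  s.noncommProd (fun i => proj K n i)
    (show (s : Set (Fin n)).Pairwise (Function.onFun Commute fun i => proj K n i) from
      fun a _ b _ _ => proj_commute a b)

variable {K n}

lemma projs_monomial (s : Finset (Fin n)) (γ : Fin n →₀ ℕ) :
    projs K n s (monomial γ (1 : K)) = if ∀ i ∈ s, γ i = 0 then monomial γ 1 else 0 := by
  classical
  induction s using Finset.cons_induction with
  | empty => simp [projs]
  | cons a s ha ih =>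
    rw [projs, Finset.noncommProd_cons]
    rw [Module.End.mul_apply]
    show proj K n a (projs K n s _) = _
    rw [ih]
    by_cases h : ∀ i ∈ s, γ i = 0
    · rw [if_pos h, proj_monomial]
      by_cases h' : γ a = 0
      · rw [if_pos h', if_pos]
        intro i hi
        rcases Finset.mem_cons.mp hi with rfl | hi
        · exact h'
        · exact h i hi
      · rw [if_neg h', if_neg]
        intro hall
        exact h' (hall a (Finset.mem_cons_self a s))
    · rw [if_neg h, map_zero, if_neg]
      intro hall
      exact h fun i hi => hall i (Finset.mem_cons_of_mem hi)

lemma projs_mem (s : Finset (Fin n)) : projs K n s ∈ IDO K n := by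
  induction s using Finset.cons_induction with
  | empty => exact one_mem _
  | cons a s ha ih =>
    rw [projs, Finset.noncommProd_cons]
    exact mul_mem (sub_mem (one_mem _) (mul_mem (intOp_mem K n a) (dOp_mem K n a))) ih

lemma Eab_zero_zero : Eab K n 0 0 = projs K n Finset.univ := by
  refine (basisMonomials (Fin n) K).ext fun γ => ?_
  rw [coe_basisMonomials]
  rw [Eab_apply, projs_monomial, coeff_monomial]
  by_cases h : γ = 0
  · subst h; simp
  · rw [if_neg h, if_neg, zero_smul]
    intro hall
    exact h (Finsupp.ext fun i => hall i (Finset.mem_univ i))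

lemma Eab_add_single_left (α β : Fin n →₀ ℕ) (i : Fin n) :
    Eab K n (α + Finsupp.single i 1) β = xOp K n i * Eab K n α β := by
  refine (basisMonomials (Fin n) K).ext fun γ => ?_
  rw [coe_basisMonomials]
  rw [Module.End.mul_apply, Eab_apply, Eab_apply, map_smul, xOp_monomial]

lemma Eab_add_single_right (α β : Fin n →₀ ℕ) (i : Fin n) :
    Eab K n α (β + Finsupp.single i 1) =
      (((β i : ℕ) : K) + 1)⁻¹ • (Eab K n α β * dOp K n i) := by
  refine (basisMonomials (Fin n) K).ext fun γ => ?_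
  rw [coe_basisMonomials]
  rw [LinearMap.smul_apply, Module.End.mul_apply, Eab_apply, Eab_apply, dOp_monomial,
    one_mul, coeff_monomial, coeff_monomial]
  by_cases h : γ = β + Finsupp.single i 1
  · subst h
    have h1 : (β + Finsupp.single i 1) - Finsupp.single i 1 = β := by
      ext j; rw [Finsupp.tsub_apply, Finsupp.add_apply]; simp [Finsupp.single_apply]
    have h2 : (β + Finsupp.single i 1 : Fin n →₀ ℕ) i = β i + 1 := by
      rw [Finsupp.add_apply, Finsupp.single_eq_same]
    rw [if_pos rfl, if_pos h1, h2]
    push_cast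
    rw [smul_smul, inv_mul_cancel₀ (Nat.cast_add_one_ne_zero (β i))]
  · rw [if_neg h]
    by_cases h' : γ - Finsupp.single i 1 = β
    · rw [if_pos h']
      have hzi : γ i = 0 := by
        by_contra hzi
        have hle : Finsupp.single i 1 ≤ γ := Finsupp.single_le_iff.mpr (by omega)
        exact h (by rw [← h', tsub_add_cancel_of_le hle])
      simp [hzi]
    · rw [if_neg h']
      simp

lemma Eab_zero_mem (α : Fin n →₀ ℕ) : Eab K n α 0 ∈ IDO K n := by
  induction α using Finsupp.induction with
  | zero => rw [Eab_zero_zero]; exact projs_mem _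
  | single_add i b f hif hb ih =>
    clear hif hb
    induction b with
    | zero => simpa using ih
    | succ k ihk =>
      have hsplit : Finsupp.single i (k + 1) + f =
          (Finsupp.single i k + f) + Finsupp.single i 1 := by
        rw [Finsupp.single_add]; abel
      rw [hsplit, Eab_add_single_left]
      exact mul_mem (xOp_mem K n i) ihk

lemma Eab_mem (α β : Fin n →₀ ℕ) : Eab K n α β ∈ IDO K n := by
  induction β using Finsupp.induction with
  | zero => exact Eab_zero_mem α
  | single_add i b f hif hb ih =>
    clear hif hb
    induction b with
    | zero => simpa using ih
    | succ k ihk =>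
      have hsplit : Finsupp.single i (k + 1) + f =
          (Finsupp.single i k + f) + Finsupp.single i 1 := by
        rw [Finsupp.single_add]; abel
      rw [hsplit, Eab_add_single_right]
      exact Subalgebra.smul_mem _ (mul_mem ihk (dOp_mem K n i)) _

lemma Eab_mul (α β γ δ : Fin n →₀ ℕ) :
    Eab K n α β * Eab K n γ δ = if γ = β then Eab K n α δ else 0 := by
  refine LinearMap.ext fun p => ?_
  rw [Module.End.mul_apply, Eab_apply, Eab_apply, coeff_smul, coeff_monomial]
  split_ifs with h
  · rw [Eab_apply, smul_eq_mul, mul_one]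
  · simp

section Units

variable (K n)

/-- `1 + E_{αβ}`, `α ≠ β`, as a unit of `I_n` (here `E_{αβ}` is square-zero). -/
noncomputable def unitOff (α β : Fin n →₀ ℕ) (hne : α ≠ β) : (IDO K n)ˣ where
  val := ⟨1 + Eab K n α β, add_mem (one_mem _) (Eab_mem α β)⟩
  inv := ⟨1 - Eab K n α β, sub_mem (one_mem _) (Eab_mem α β)⟩
  val_inv := by
    apply Subtype.ext
    have h0 : Eab K n α β * Eab K n α β = 0 := by
      rw [Eab_mul, if_neg hne]
    show (1 + Eab K n α β) * (1 - Eab K n α β) = 1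
    rw [mul_sub, mul_one, add_mul, one_mul, h0, add_zero]
    abel
  inv_val := by
    apply Subtype.ext
    have h0 : Eab K n α β * Eab K n α β = 0 := by
      rw [Eab_mul, if_neg hne]
    show (1 - Eab K n α β) * (1 + Eab K n α β) = 1
    rw [sub_mul, one_mul, mul_add, mul_one, h0, add_zero]
    abel

/-- The central scalar `1/2` in `End`. -/
noncomputable def half : Module.End K (MvPolynomial (Fin n) K) :=
  algebraMap K _ ((2 : K)⁻¹)

variable {K n}

lemma half_add_half : half K n + half K n = 1 := by
  rw [half, ← map_add, ← map_one (algebraMap K (Module.End K (MvPolynomial (Fin n) K)))]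
  norm_num

variable (K n)

/-- `1 + E_{αα}` as a unit of `I_n` (here `E_{αα}` is idempotent, char 0 used). -/
noncomputable def unitDiag (α : Fin n →₀ ℕ) : (IDO K n)ˣ where
  val := ⟨1 + Eab K n α α, add_mem (one_mem _) (Eab_mem α α)⟩
  inv := ⟨1 - half K n * Eab K n α α,
    sub_mem (one_mem _) (mul_mem (Subalgebra.algebraMap_mem _ _) (Eab_mem α α))⟩
  val_inv := by
    apply Subtype.ext
    have h0 : Eab K n α α * Eab K n α α = Eab K n α α := by
      rw [Eab_mul, if_pos rfl]
    show (1 + Eab K n α α) * (1 - half K n * Eab K n α α) = 1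
    have hc : Eab K n α α * half K n = half K n * Eab K n α α :=
      (Algebra.commutes ((2:K)⁻¹) (Eab K n α α)).symm
    rw [mul_sub, mul_one, add_mul, one_mul, ← mul_assoc, hc, mul_assoc, h0,
      ← add_mul, half_add_half, one_mul]
    abel
  inv_val := by
    apply Subtype.ext
    have h0 : Eab K n α α * Eab K n α α = Eab K n α α := by
      rw [Eab_mul, if_pos rfl]
    show (1 - half K n * Eab K n α α) * (1 + Eab K n α α) = 1
    rw [sub_mul, one_mul, mul_add, mul_one, mul_assoc, h0,
      ← add_mul, half_add_half, one_mul]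
    abel

variable {K n}

end Units

lemma comm_Eab (u : (IDO K n)ˣ) (h : ∀ v : (IDO K n)ˣ, u * v = v * u) (α β : Fin n →₀ ℕ) :
    ((u : IDO K n) : Module.End K (MvPolynomial (Fin n) K)) * Eab K n α β =
      Eab K n α β * ((u : IDO K n) : Module.End K (MvPolynomial (Fin n) K)) := by
  have h2 : ((u : IDO K n) : Module.End K (MvPolynomial (Fin n) K)) *
        (1 + Eab K n α β) =
      (1 + Eab K n α β) * ((u : IDO K n) : Module.End K (MvPolynomial (Fin n) K)) := by
    rcases eq_or_ne α β with rfl | hne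
    · have h1 := h (unitDiag K n α)
      have := congrArg (fun w : (IDO K n)ˣ =>
        ((w : IDO K n) : Module.End K (MvPolynomial (Fin n) K))) h1
      simpa [unitDiag, MulMemClass.coe_mul] using this
    · have h1 := h (unitOff K n α β hne)
      have := congrArg (fun w : (IDO K n)ˣ =>
        ((w : IDO K n) : Module.End K (MvPolynomial (Fin n) K))) h1
      simpa [unitOff, MulMemClass.coe_mul] using this
  rw [mul_add, mul_one, add_mul, one_mul] at h2
  exact add_left_cancel h2


lemma central_scalar (f : Module.End K (MvPolynomial (Fin n) K))
    (hcomm : ∀ α β : Fin n →₀ ℕ, f * Eab K n α β = Eab K n α β * f) :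
    f = algebraMap K (Module.End K (MvPolynomial (Fin n) K))
      (coeff (0 : Fin n →₀ ℕ) (f (monomial 0 1))) := by
  have key : ∀ α : Fin n →₀ ℕ,
      f (monomial α (1 : K)) = coeff 0 (f (monomial 0 1)) • monomial α 1 := by
    intro α
    have hd := congrFun (congrArg (fun g : Module.End K (MvPolynomial (Fin n) K) => ⇑g)
      (hcomm α α)) (monomial α (1 : K))
    have ho := congrFun (congrArg (fun g : Module.End K (MvPolynomial (Fin n) K) => ⇑g)
      (hcomm 0 α)) (monomial α (1 : K))
    simp only [Module.End.mul_apply, Eab_apply, coeff_monomial, eq_self_iff_true, if_true,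
      one_smul] at hd ho
    rw [hd, ho, coeff_smul, coeff_monomial, if_pos rfl, smul_eq_mul, mul_one]
  refine (basisMonomials (Fin n) K).ext fun γ => ?_
  rw [coe_basisMonomials, key γ, Module.algebraMap_end_apply]

end Statement10Aux

theorem statement10 (K : Type*) [Field K] [CharZero K] (n : ℕ) :
    ∀ u : (IDO K n)ˣ, (∀ v : (IDO K n)ˣ, u * v = v * u) ↔
      ∃ lam : K, lam ≠ 0 ∧ (u : IDO K n) = algebraMap K (IDO K n) lam := by
  intro u
  constructor
  · intro h
    have hfl := Statement10Aux.central_scalar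
      (((u : IDO K n) : Module.End K (MvPolynomial (Fin n) K)))
      (Statement10Aux.comm_Eab u h)
    refine ⟨coeff (0 : Fin n →₀ ℕ)
      (((u : IDO K n) : Module.End K (MvPolynomial (Fin n) K)) (monomial 0 1)), ?_, ?_⟩
    · intro h0
      rw [h0, map_zero] at hfl
      have hmu := congrArg (fun w : IDO K n =>
        (w : Module.End K (MvPolynomial (Fin n) K))) u.mul_inv
      simp only [MulMemClass.coe_mul, OneMemClass.coe_one] at hmu
      rw [hfl, zero_mul] at hmu
      have h1 := LinearMap.congr_fun hmu (1 : MvPolynomial (Fin n) K)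
      simp at h1
    · exact Subtype.ext hfl
  · rintro ⟨lam, _, hu⟩ v
    apply Units.ext
    show (u : IDO K n) * v = (v : IDO K n) * u
    rw [hu, Algebra.commutes]
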